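/- Let f : ℝⁿ → ℝ be convex and differentiable with minimizer X⋆, and let X satisfy Ẋ = −∇f(X) with X(0) = X₀. Define E(t) = t(f(X(t)) − f⋆) + (1/2)‖X(t) − X⋆‖² − ‖X₀ − X⋆‖² + ∫₀ᵗ s‖Ẋ(s)‖² ds + ∫₀ᵗ ( f⋆ − f(X(s)) − ⟨∇f(X(s)), X⋆ − X(s)⟩ ) ds. Then E(t) = −(1/2)‖X₀ − X⋆‖² for all t ≥ 0. -/

import Mathlib

open Filter MeasureTheory
open scoped RealInnerProductSpace Topology

set_option maxHeartbeats 1000000 in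
theorem gradient_flow_conservation_law
    {E : Type*} [NormedAddCommGroup E] [InnerProductSpace ℝ E] [CompleteSpace E]
    (f : E → ℝ) (g : E → E)
    (hgrad : ∀ x, HasGradientAt f (g x) x)
    (hconv : ∀ x y, 0 ≤ f x - f y - ⟪g y, x - y⟫)
    (X X' : ℝ → E)
    (hX' : ∀ t ∈ Set.Ici (0:ℝ), HasDerivAt X (X' t) t)
    (hflow : ∀ t ∈ Set.Ici (0:ℝ), X' t = -(g (X t)))
    (X₀ : E) (hX0 : X 0 = X₀)
    (Xs : E) (hmin : ∀ x, f Xs ≤ f x) :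
    ∀ t ≥ (0:ℝ),
      t * (f (X t) - f Xs) + (1 / 2) * ‖X t - Xs‖ ^ 2 - ‖X₀ - Xs‖ ^ 2
        + (∫ s in (0:ℝ)..t, s * ‖X' s‖ ^ 2)
        + (∫ s in (0:ℝ)..t, f Xs - f (X s) - ⟪g (X s), Xs - X s⟫)
      = -(1 / 2) * ‖X₀ - Xs‖ ^ 2 := by
  intro t ht
  -- notation
  set h₁ : ℝ → ℝ := fun s => s * ‖X' s‖ ^ 2 with hh₁
  set h₂ : ℝ → ℝ := fun s => f Xs - f (X s) - ⟪g (X s), Xs - X s⟫ with hh₂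
  set h : ℝ → ℝ := fun s => h₁ s + h₂ s with hh
  set ψ : ℝ → ℝ := fun u => -(u * (f (X u) - f Xs)) - (1/2) * ⟪X u - Xs, X u - Xs⟫ with hψ
  -- ψ has derivative h on Ici 0
  have hψderiv : ∀ s ∈ Set.Ici (0:ℝ), HasDerivAt ψ (h s) s := by
    intro s hs
    have hXd := hX' s hs
    have hfd : HasDerivAt (fun u => f (X u)) ⟪g (X s), X' s⟫ s := by
      have := (hgrad (X s)).hasFDerivAt.comp_hasDerivAt s hXd
      simpa [InnerProductSpace.toDual_apply_apply, Function.comp_def] using this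
    have h1 : HasDerivAt (fun u => -(u * (f (X u) - f Xs)))
        (-((1 : ℝ) * (f (X s) - f Xs) + s * ⟪g (X s), X' s⟫)) s := by
      exact ((hasDerivAt_id s).mul (hfd.sub_const (f Xs))).neg
    have hsub : HasDerivAt (fun u => X u - Xs) (X' s) s := hXd.sub_const Xs
    have h2 : HasDerivAt (fun u => ⟪X u - Xs, X u - Xs⟫)
        (⟪X s - Xs, X' s⟫ + ⟪X' s, X s - Xs⟫) s := hsub.inner ℝ hsub
    have h3 := h1.sub (h2.const_mul (1/2 : ℝ))
    convert h3 using 1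
    rotate_left 3
    have hfl := hflow s hs
    have e1 : ⟪g (X s), X' s⟫ = -‖X' s‖ ^ 2 := by
      rw [hfl]
      simp [real_inner_self_eq_norm_sq, inner_neg_left, inner_neg_right]
    have e2 : ⟪X s - Xs, X' s⟫ = ⟪g (X s), Xs - X s⟫ := by
      rw [hfl, inner_neg_right, real_inner_comm]
      rw [show Xs - X s = -(X s - Xs) by abel, inner_neg_right]
    have e3 : ⟪X' s, X s - Xs⟫ = ⟪g (X s), Xs - X s⟫ := by
      rw [real_inner_comm]; exact e2
    simp only [hh, hh₁, hh₂, e1, e2, e3]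
    ring
    all_goals rfl
  -- nonnegativity of the two summands
  have h₁nonneg : ∀ s ∈ Set.Ici (0:ℝ), 0 ≤ h₁ s := fun s hs => by
    exact mul_nonneg hs (by positivity)
  have h₂nonneg : ∀ s, 0 ≤ h₂ s := fun s => hconv Xs (X s)
  have hnonneg : ∀ s ∈ Set.Ici (0:ℝ), 0 ≤ h s :=
    fun s hs => add_nonneg (h₁nonneg s hs) (h₂nonneg s)
  -- continuity of ψ on [0, t]
  have hXcont : ContinuousOn X (Set.Icc 0 t) := fun s hs =>
    ((hX' s hs.1).continuousAt).continuousWithinAt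
  have hψcont : ContinuousOn ψ (Set.Icc 0 t) := by
    apply ContinuousOn.sub
    · apply ContinuousOn.neg
      apply continuousOn_id.mul
      apply ContinuousOn.sub _ continuousOn_const
      exact fun s hs => ((hgrad (X s)).differentiableAt.continuousAt.comp
        (hX' s hs.1).continuousAt).continuousWithinAt
    · exact continuousOn_const.mul ((hXcont.sub continuousOn_const).inner
        (hXcont.sub continuousOn_const))
  -- h is interval integrable
  have hIcc_sub : Set.Icc (0:ℝ) t ⊆ Set.Ici 0 := Set.Icc_subset_Ici_self
  have hIntInt : IntervalIntegrable h volume 0 t := by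
    apply intervalIntegral.intervalIntegrable_deriv_of_nonneg
    · rwa [Set.uIcc_of_le ht]
    · intro s hs
      rw [min_eq_left ht, max_eq_right ht] at hs
      exact hψderiv s (le_of_lt hs.1)
    · intro s hs
      rw [min_eq_left ht, max_eq_right ht] at hs
      exact hnonneg s (le_of_lt hs.1)
  have hIOn : IntegrableOn h (Set.Ioc 0 t) volume :=
    (intervalIntegrable_iff_integrableOn_Ioc_of_le ht).mp hIntInt
  -- measurability of h₂ on Ioc 0 t
  have h₂meas : AEStronglyMeasurable h₂ (volume.restrict (Set.Ioc 0 t)) := by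
    have hd : AEStronglyMeasurable (deriv X) (volume.restrict (Set.Ioc 0 t)) :=
      (stronglyMeasurable_deriv X).aestronglyMeasurable
    have hXm : AEStronglyMeasurable X (volume.restrict (Set.Ioc 0 t)) := by
      apply ContinuousOn.aestronglyMeasurable _ measurableSet_Ioc
      exact fun s hs => ((hX' s (le_of_lt hs.1)).continuousAt).continuousWithinAt
    have hfXm : AEStronglyMeasurable (fun s => f (X s)) (volume.restrict (Set.Ioc 0 t)) := by
      apply ContinuousOn.aestronglyMeasurable _ measurableSet_Ioc
      exact fun s hs => ((hgrad (X s)).differentiableAt.continuousAt.comp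
        (hX' s (le_of_lt hs.1)).continuousAt).continuousWithinAt
    have hinner : AEStronglyMeasurable (fun s => ⟪deriv X s, X s - Xs⟫)
        (volume.restrict (Set.Ioc 0 t)) :=
      hd.inner (hXm.sub aestronglyMeasurable_const)
    have : AEStronglyMeasurable (fun s => f Xs - f (X s) - ⟪deriv X s, X s - Xs⟫)
        (volume.restrict (Set.Ioc 0 t)) :=
      (aestronglyMeasurable_const.sub hfXm).sub hinner
    apply this.congr
    filter_upwards [ae_restrict_mem measurableSet_Ioc] with s hs
    have hsI : s ∈ Set.Ici (0:ℝ) := le_of_lt hs.1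
    have hder : deriv X s = X' s := (hX' s hsI).deriv
    have e : ⟪g (X s), Xs - X s⟫ = - ⟪g (X s), X s - Xs⟫ := by
      rw [show Xs - X s = -(X s - Xs) by abel, inner_neg_right]
    simp only [hh₂, hder, hflow s hsI, e, inner_neg_left]
  -- h₂ integrable on Ioc (dominated by h)
  have h₂int : IntegrableOn h₂ (Set.Ioc 0 t) volume := by
    apply Integrable.mono' hIOn h₂meas
    filter_upwards [ae_restrict_mem measurableSet_Ioc] with s hs
    have hsI : s ∈ Set.Ici (0:ℝ) := le_of_lt hs.1
    rw [Real.norm_eq_abs, abs_of_nonneg (h₂nonneg s)]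
    have := h₁nonneg s hsI
    simp only [hh]; linarith
  have h₁int : IntegrableOn h₁ (Set.Ioc 0 t) volume := by
    have : IntegrableOn (fun s => h s - h₂ s) (Set.Ioc 0 t) volume := hIOn.sub h₂int
    apply this.congr_fun _ measurableSet_Ioc
    intro s _
    simp only [hh]; ring
  have h₁II : IntervalIntegrable h₁ volume 0 t :=
    (intervalIntegrable_iff_integrableOn_Ioc_of_le ht).mpr h₁int
  have h₂II : IntervalIntegrable h₂ volume 0 t :=
    (intervalIntegrable_iff_integrableOn_Ioc_of_le ht).mpr h₂int
  -- FTC : ∫ h = ψ t - ψ 0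
  have hFTC : (∫ s in (0:ℝ)..t, h s) = ψ t - ψ 0 := by
    apply intervalIntegral.integral_eq_sub_of_hasDerivAt _ hIntInt
    intro s hs
    rw [Set.uIcc_of_le ht] at hs
    exact hψderiv s hs.1
  have hsplit : (∫ s in (0:ℝ)..t, h₁ s) + (∫ s in (0:ℝ)..t, h₂ s)
      = ∫ s in (0:ℝ)..t, h s := by
    rw [← intervalIntegral.integral_add h₁II h₂II]
  -- evaluate ψ at 0 and t
  have hψ0 : ψ 0 = -((1/2) * ‖X₀ - Xs‖ ^ 2) := by
    simp [hψ, hX0, real_inner_self_eq_norm_sq]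
  have hψt : ψ t = -(t * (f (X t) - f Xs)) - (1/2) * ‖X t - Xs‖ ^ 2 := by
    simp [hψ, real_inner_self_eq_norm_sq]
  have key : (∫ s in (0:ℝ)..t, h₁ s) + (∫ s in (0:ℝ)..t, h₂ s)
      = -(t * (f (X t) - f Xs)) - (1/2) * ‖X t - Xs‖ ^ 2 + (1/2) * ‖X₀ - Xs‖ ^ 2 := by
    rw [hsplit, hFTC, hψ0, hψt]; ring
  have e1 : (∫ s in (0:ℝ)..t, s * ‖X' s‖ ^ 2) = ∫ s in (0:ℝ)..t, h₁ s := rfl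
  have e2 : (∫ s in (0:ℝ)..t, f Xs - f (X s) - ⟪g (X s), Xs - X s⟫)
      = ∫ s in (0:ℝ)..t, h₂ s := rfl
  rw [e1, e2]
  linarith [key]
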